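/- Let A and B be finite non-empty subsets of ℤ with |A| = |B| ≥ 4, min B = 0 and max B = m. Suppose that for all b₁, b₂, b₃ ∈ B we have |A + {b₁, b₂, b₃}| ≤ |A| + |B| - 1. Then A and B are arithmetic progressions with the same common difference. -/

import Mathlib

open Finset Pointwise

/-- A finite set of integers is an arithmetic progression with common difference `d`. -/
def IsAPZ (S : Finset ℤ) (d : ℤ) : Prop :=
  ∃ x : ℤ, S = (Finset.range S.card).image (fun i : ℕ => x + d * (i : ℤ))

private lemma add_triple_eq (A : Finset ℤ) (x y z : ℤ) :
    A + ({x, y, z} : Finset ℤ) = A.image (· + x) ∪ (A.image (· + y) ∪ A.image (· + z)) := by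
  ext t
  simp only [Finset.mem_add, mem_insert, mem_singleton, mem_union, mem_image]
  constructor
  · rintro ⟨a, ha, b, hb, rfl⟩
    rcases hb with rfl | rfl | rfl
    · exact Or.inl ⟨a, ha, rfl⟩
    · exact Or.inr (Or.inl ⟨a, ha, rfl⟩)
    · exact Or.inr (Or.inr ⟨a, ha, rfl⟩)
  · rintro (⟨a, ha, rfl⟩ | ⟨a, ha, rfl⟩ | ⟨a, ha, rfl⟩)
    · exact ⟨a, ha, x, by simp, rfl⟩
    · exact ⟨a, ha, y, by simp, rfl⟩
    · exact ⟨a, ha, z, by simp, rfl⟩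

private lemma min'_image_add (s : Finset ℤ) (hs : s.Nonempty) (c : ℤ) :
    (s.image (fun b => c + b)).min' (hs.image _) = c + s.min' hs := by
  apply le_antisymm
  · exact Finset.min'_le _ _ (Finset.mem_image_of_mem _ (s.min'_mem hs))
  · obtain ⟨x, hx, he⟩ := Finset.mem_image.1 ((s.image (fun b => c + b)).min'_mem (hs.image _))
    rw [← he]
    exact (add_le_add_iff_left c).2 (s.min'_le x hx)

theorem stmt_5 (A B : Finset ℤ) (hA : A.Nonempty) (hB : B.Nonempty)
    (hcard : A.card = B.card) (h4 : 4 ≤ A.card) (m : ℤ)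
    (hmin : B.min' hB = 0) (hmax : B.max' hB = m)
    (hyp : ∀ b₁ ∈ B, ∀ b₂ ∈ B, ∀ b₃ ∈ B,
      (A + ({b₁, b₂, b₃} : Finset ℤ)).card ≤ A.card + B.card - 1) :
    ∃ d : ℤ, 0 < d ∧ IsAPZ A d ∧ IsAPZ B d := by
  classical
  set n := A.card with hn
  have hnB : B.card = n := hcard.symm
  have h0B : (0:ℤ) ∈ B := hmin ▸ B.min'_mem hB
  have hmB : m ∈ B := hmax ▸ B.max'_mem hB
  have hB0 : ∀ b ∈ B, 0 ≤ b := fun b hb => hmin ▸ B.min'_le b hb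
  have hBm : ∀ b ∈ B, b ≤ m := fun b hb => hmax ▸ B.le_max' b hb
  have hmpos : 0 < m := by
    obtain ⟨b, hb, hbne⟩ : ∃ b ∈ B, b ≠ 0 := by
      by_contra h
      push_neg at h
      have : B ⊆ {0} := fun b hb => mem_singleton.2 (h b hb)
      have := Finset.card_le_card this
      simp at this
      omega
    have := hB0 b hb
    have := hBm b hb
    omega
  -- translates
  have cardAb : ∀ b : ℤ, (A.image (· + b)).card = n :=
    fun b => Finset.card_image_of_injective _ (add_left_injective b)
  have memAb : ∀ {b t : ℤ}, t ∈ A.image (· + b) ↔ ∃ a ∈ A, a + b = t := by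
    intro b t
    constructor
    · intro h; obtain ⟨a, ha, he⟩ := Finset.mem_image.1 h; exact ⟨a, ha, he⟩
    · rintro ⟨a, ha, he⟩; exact Finset.mem_image.2 ⟨a, ha, he⟩
  -- key consequence of the hypothesis
  have key : ∀ b ∈ B, (A.image (· + b) ∪ (A ∪ A.image (· + m))).card ≤ 2 * n - 1 := by
    intro b hb
    have h := hyp b hb 0 h0B m hmB
    rw [add_triple_eq] at h
    have h0 : A.image (· + (0:ℤ)) = A := by
      ext t; simp
    rw [h0] at h
    calc (A.image (· + b) ∪ (A ∪ A.image (· + m))).card ≤ A.card + B.card - 1 := h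
    _ = 2 * n - 1 := by omega
  set U : Finset ℤ := A ∪ A.image (· + m) with hU
  set k := (A.image (· + m) \ A).card with hk
  have hUcard : U.card = n + k := by
    rw [hU, Finset.union_comm]
    rw [← Finset.card_sdiff_add_card]
    omega
  have hAsubU : A ⊆ U := by rw [hU]; exact Finset.subset_union_left
  have hkle : k ≤ n - 1 := by
    have h := key 0 h0B
    have h0 : A.image (· + (0:ℤ)) = A := by ext t; simp
    rw [h0, Finset.union_eq_right.2 hAsubU] at h
    omega
  -- the interior of B
  set Bi : Finset ℤ := (B.erase 0).erase m with hBi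
  have hBicard : Bi.card = n - 2 := by
    rw [hBi, Finset.card_erase_of_mem, Finset.card_erase_of_mem h0B]
    · omega
    · exact Finset.mem_erase.2 ⟨by omega, hmB⟩
  have hBimem : ∀ b ∈ Bi, b ∈ B ∧ 0 < b ∧ b < m := by
    intro b hb
    rw [hBi] at hb
    have h1 := Finset.mem_erase.1 hb
    have h2 := Finset.mem_erase.1 h1.2
    refine ⟨h2.2, ?_, ?_⟩
    · have := hB0 b h2.2; omega
    · have := hBm b h2.2
      rcases lt_or_eq_of_le this with h | h
      · exact h
      · exact absurd h h1.1
  -- lower bound on intersections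
  have hinter : ∀ b ∈ Bi, k + 1 ≤ (A.image (· + b) ∩ U).card := by
    intro b hb
    have h1 := Finset.card_inter_add_card_union (A.image (· + b)) U
    have h2 := key b (hBimem b hb).1
    rw [cardAb, hUcard] at h1
    omega
  -- residues
  set R : Finset ℤ := A.image (· % m) with hR
  set r := R.card with hr
  have hrpos : 1 ≤ r := by
    rw [hr, hR]
    obtain ⟨a, ha⟩ := hA
    exact Finset.card_pos.2 ⟨a % m, Finset.mem_image_of_mem _ ha⟩
  have hmemR : ∀ a ∈ A, a % m ∈ R := fun a ha => by
    rw [hR]; exact Finset.mem_image_of_mem _ ha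
  have hUresR : ∀ c ∈ U, c % m ∈ R := by
    intro c hc
    rw [hU] at hc
    rcases Finset.mem_union.1 hc with h | h
    · exact hmemR c h
    · obtain ⟨a, ha, he⟩ := memAb.1 h
      have : c % m = a % m := by
        rw [← he]
        simpa using Int.add_mul_emod_self_left (a := a) (b := m) (c := 1)
      rw [this]; exact hmemR a ha
  -- r ≤ k
  have hrk : r ≤ k := by
    rw [hr, hk]
    apply Finset.card_le_card_of_injOn
      (fun ρ => (if h : ((A.filter (fun a => a % m = ρ)).Nonempty)
                 then (A.filter (fun a => a % m = ρ)).max' h else 0) + m)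
    · intro ρ hρ
      rw [hR] at hρ
      obtain ⟨a, ha, he⟩ := Finset.mem_image.1 hρ
      have hne : (A.filter (fun a => a % m = ρ)).Nonempty :=
        ⟨a, Finset.mem_filter.2 ⟨ha, he⟩⟩
      simp only [dif_pos hne, Finset.mem_coe]
      set x := (A.filter (fun a => a % m = ρ)).max' hne with hx
      have hxf : x ∈ A.filter (fun a => a % m = ρ) := Finset.max'_mem _ hne
      have hxA : x ∈ A := (Finset.mem_filter.1 hxf).1
      have hxρ : x % m = ρ := (Finset.mem_filter.1 hxf).2
      apply Finset.mem_sdiff.2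
      constructor
      · exact memAb.2 ⟨x, hxA, rfl⟩
      · intro hcon
        have h1 : (x + m) % m = ρ := by
          rw [← hxρ]
          simpa using Int.add_mul_emod_self_left (a := x) (b := m) (c := 1)
        have h2 : x + m ∈ A.filter (fun a => a % m = ρ) :=
          Finset.mem_filter.2 ⟨hcon, h1⟩
        have := Finset.le_max' _ _ h2
        omega
    · intro ρ1 h1 ρ2 h2 he
      rw [hR] at h1 h2
      obtain ⟨a1, ha1, hea1⟩ := Finset.mem_image.1 h1
      obtain ⟨a2, ha2, hea2⟩ := Finset.mem_image.1 h2
      have hne1 : (A.filter (fun a => a % m = ρ1)).Nonempty := ⟨a1, Finset.mem_filter.2 ⟨ha1, hea1⟩⟩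
      have hne2 : (A.filter (fun a => a % m = ρ2)).Nonempty := ⟨a2, Finset.mem_filter.2 ⟨ha2, hea2⟩⟩
      simp only [dif_pos hne1, dif_pos hne2] at he
      have hx1 := Finset.mem_filter.1 ((A.filter (fun a => a % m = ρ1)).max'_mem hne1)
      have hx2 := Finset.mem_filter.1 ((A.filter (fun a => a % m = ρ2)).max'_mem hne2)
      have : (A.filter (fun a => a % m = ρ1)).max' hne1 = (A.filter (fun a => a % m = ρ2)).max' hne2 := by omega
      rw [← hx1.2, ← hx2.2, this]
  -- double counting
  have hcount : (n - 2) * (k + 1) ≤ n * (r - 1) := by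
    have hlow : (n - 2) * (k + 1) ≤ ∑ b ∈ Bi, (A.image (· + b) ∩ U).card := by
      calc (n-2) * (k+1) = Bi.card • (k+1) := by rw [hBicard]; simp [smul_eq_mul]
      _ ≤ ∑ b ∈ Bi, (A.image (· + b) ∩ U).card := Finset.card_nsmul_le_sum _ _ _ hinter
    have hsig : ∑ b ∈ Bi, (A.image (· + b) ∩ U).card
        = (Bi.sigma (fun _b => A.image (· + _b) ∩ U)).card := (Finset.card_sigma _ _).symm
    have hup : (Bi.sigma (fun _b => A.image (· + _b) ∩ U)).card
        ≤ (A.sigma (fun a => R.erase (a % m))).card := by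
      apply Finset.card_le_card_of_injOn (fun p => ⟨p.2 - p.1, p.2 % m⟩)
      · rintro ⟨b, c⟩ hp
        have hp' := Finset.mem_sigma.1 hp
        try dsimp only at hp'
        have hbBi : b ∈ Bi := hp'.1
        have hc := Finset.mem_inter.1 hp'.2
        try dsimp only at hc
        obtain ⟨a, ha, hae⟩ := memAb.1 hc.1
        obtain ⟨hbB, hb0, hbm⟩ := hBimem b hbBi
        apply Finset.mem_sigma.2
        try dsimp only
        refine ⟨?_, ?_⟩
        · have : c - b = a := by omega
          rw [this]; exact ha
        · apply Finset.mem_erase.2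
          refine ⟨?_, hUresR c hc.2⟩
          intro hcon
          have hz : (c - (c - b)) % m = 0 := by
            rw [Int.sub_emod, hcon, sub_self, Int.zero_emod]
          have hd : m ∣ (c - (c - b)) := Int.dvd_of_emod_eq_zero hz
          have hd' : m ∣ b := by
            have : c - (c - b) = b := by ring
            rwa [this] at hd
          have := Int.le_of_dvd hb0 hd'
          omega
      · rintro ⟨b1, c1⟩ h1 ⟨b2, c2⟩ h2 he
        have h1' := Finset.mem_sigma.1 (Finset.mem_coe.1 h1)
        have h2' := Finset.mem_sigma.1 (Finset.mem_coe.1 h2)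
        try dsimp only at h1' h2' he
        obtain ⟨_, hb10, hb1m⟩ := hBimem b1 h1'.1
        obtain ⟨_, hb20, hb2m⟩ := hBimem b2 h2'.1
        have hesub : c1 - b1 = c2 - b2 := congrArg Sigma.fst he
        have hemod : c1 % m = c2 % m := congrArg (fun p : (_ : ℤ) × ℤ => p.2) he
        have hz : (c1 - c2) % m = 0 := by
          rw [Int.sub_emod, hemod, sub_self, Int.zero_emod]
        have hd : m ∣ (c1 - c2) := Int.dvd_of_emod_eq_zero hz
        have hd' : m ∣ (b1 - b2) := by
          have : c1 - c2 = b1 - b2 := by omega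
          rwa [this] at hd
        have hb12 : b1 - b2 = 0 :=
          Int.eq_zero_of_abs_lt_dvd hd' (abs_lt.2 ⟨by omega, by omega⟩)
        have hbe : b1 = b2 := by omega
        have hce : c1 = c2 := by omega
        subst hbe; subst hce; rfl
    have htar : (A.sigma (fun a => R.erase (a % m))).card = n * (r - 1) := by
      rw [Finset.card_sigma]
      have hstep : ∀ a ∈ A, (R.erase (a % m)).card = r - 1 := fun a ha => by
        rw [Finset.card_erase_of_mem (hmemR a ha)]
      calc ∑ a ∈ A, (R.erase (a % m)).card = ∑ _a ∈ A, (r-1) := Finset.sum_congr rfl hstep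
      _ = n * (r-1) := by rw [Finset.sum_const, smul_eq_mul]
    calc (n-2)*(k+1) ≤ ∑ b ∈ Bi, (A.image (· + b) ∩ U).card := hlow
    _ = (Bi.sigma (fun _b => A.image (· + _b) ∩ U)).card := hsig
    _ ≤ (A.sigma (fun a => R.erase (a % m))).card := hup
    _ = n * (r - 1) := htar
  -- conclude k = n - 1
  have hkn : k = n - 1 := by
    have h2n : 2 ≤ n := by omega
    have h1 : ((n:ℤ) - 2) * ((k:ℤ) + 1) ≤ (n:ℤ) * ((r:ℤ) - 1) := by
      have := hcount
      zify [h2n, hrpos] at this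
      convert this using 2
    have h2 : (n:ℤ) * ((r:ℤ) - 1) ≤ (n:ℤ) * ((k:ℤ) - 1) := by
      apply mul_le_mul_of_nonneg_left _ (by positivity)
      have : (r:ℤ) ≤ (k:ℤ) := by exact_mod_cast hrk
      linarith
    have h3 : (n:ℤ) - 1 ≤ (k:ℤ) := by nlinarith [h1, h2]
    have h4 : ((n:ℤ)) ≤ (k:ℤ) + 1 := by linarith
    have h5 : n ≤ k + 1 := by exact_mod_cast h4
    omega
  -- Step: every translate is inside U
  have hU2 : U.card = 2 * n - 1 := by omega
  have hsub : ∀ b ∈ B, A.image (· + b) ⊆ U := by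
    intro b hb
    have h1 := key b hb
    have h2 : U ⊆ A.image (· + b) ∪ U := Finset.subset_union_right
    have h3 : A.image (· + b) ∪ U = U :=
      (Finset.eq_of_subset_of_card_le h2 (by omega)).symm
    rw [← h3]
    exact Finset.subset_union_left
  have hmem : ∀ b ∈ B, ∀ a ∈ A, a + b ∈ A ∨ a + b - m ∈ A := by
    intro b hb a ha
    have h1 : a + b ∈ U := hsub b hb (memAb.2 ⟨a, ha, rfl⟩)
    rw [hU] at h1
    rcases Finset.mem_union.1 h1 with h | h
    · exact Or.inl h
    · obtain ⟨a', ha', he⟩ := memAb.1 h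
      right
      have hee : a + b - m = a' := by omega
      rw [hee]; exact ha'
  -- extremes
  set α := A.min' hA with hα
  set ω := A.max' hA with hω
  have hαA : α ∈ A := A.min'_mem hA
  have hωA : ω ∈ A := A.max'_mem hA
  have hαle : ∀ a ∈ A, α ≤ a := fun a ha => A.min'_le a ha
  have hωge : ∀ a ∈ A, a ≤ ω := fun a ha => A.le_max' a ha
  have hDm : α + m ≤ ω := by
    have hiu := Finset.card_inter_add_card_union A (A.image (· + m))
    rw [← hU] at hiu
    have hcm := cardAb m
    have h1 : (A ∩ A.image (· + m)).card = 1 := by omega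
    obtain ⟨x, hx⟩ := Finset.card_eq_one.1 h1
    have hxm : x ∈ A ∩ A.image (· + m) := hx ▸ Finset.mem_singleton_self x
    have h2 := Finset.mem_inter.1 hxm
    obtain ⟨a', ha', he⟩ := memAb.1 h2.2
    have := hαle a' ha'
    have := hωge x h2.1
    omega
  -- X = A.erase ω
  have hX : (B.erase m).image (fun b => α + b) = A.erase ω := by
    apply Finset.eq_of_subset_of_card_le
    · intro x hx
      obtain ⟨b, hb, he⟩ := Finset.mem_image.1 hx
      have hbm' : b ≠ m := (Finset.mem_erase.1 hb).1
      have hbB : b ∈ B := (Finset.mem_erase.1 hb).2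
      have hbm : b < m := lt_of_le_of_ne (hBm b hbB) hbm'
      have hb0 := hB0 b hbB
      have hxA : x ∈ A := by
        rcases hmem b hbB α hαA with h | h
        · rwa [he] at h
        · exfalso
          have := hαle _ h
          omega
      apply Finset.mem_erase.2
      refine ⟨?_, hxA⟩
      intro hc
      rw [hc] at he
      omega
    · rw [Finset.card_erase_of_mem hωA,
        Finset.card_image_of_injective _ (add_right_injective α),
        Finset.card_erase_of_mem hmB]
      omega
  -- Y = A.erase α
  have hY : (B.erase 0).image (fun b => (ω - m) + b) = A.erase α := by
    apply Finset.eq_of_subset_of_card_le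
    · intro x hx
      obtain ⟨b, hb, he⟩ := Finset.mem_image.1 hx
      have hb0' : b ≠ 0 := (Finset.mem_erase.1 hb).1
      have hbB : b ∈ B := (Finset.mem_erase.1 hb).2
      have hb0 : 0 < b := lt_of_le_of_ne (hB0 b hbB) (Ne.symm hb0')
      have hxA : x ∈ A := by
        rcases hmem b hbB ω hωA with h | h
        · exfalso
          have := hωge _ h
          omega
        · have hee : ω + b - m = x := by omega
          rwa [hee] at h
      apply Finset.mem_erase.2
      refine ⟨?_, hxA⟩
      intro hc
      rw [hc] at he
      omega
    · rw [Finset.card_erase_of_mem hαA,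
        Finset.card_image_of_injective _ (add_right_injective (ω - m)),
        Finset.card_erase_of_mem h0B]
      omega
  -- Z both ways
  have hBi1 : (B.erase m).erase 0 = Bi := by rw [hBi, Finset.erase_right_comm]
  have hBine : Bi.Nonempty := by
    rw [← Finset.card_pos, hBicard]; omega
  have hZ1 : Bi.image (fun b => α + b) = (A.erase ω).erase α := by
    rw [← hBi1, ← hX]
    ext x
    simp only [Finset.mem_image, Finset.mem_erase]
    constructor
    · rintro ⟨b, ⟨hb0, hb⟩, he⟩
      refine ⟨?_, ⟨b, hb, he⟩⟩
      intro hc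
      rw [hc] at he
      exact hb0 (by omega)
    · rintro ⟨hxα, b, hb, he⟩
      refine ⟨b, ⟨?_, hb⟩, he⟩
      intro hc
      rw [hc] at he
      exact hxα (by omega)
  have hZ2 : Bi.image (fun b => (ω - m) + b) = (A.erase ω).erase α := by
    rw [Finset.erase_right_comm, ← hY, hBi]
    ext x
    simp only [Finset.mem_image, Finset.mem_erase]
    constructor
    · rintro ⟨b, ⟨hbm', hb⟩, he⟩
      refine ⟨?_, ⟨b, hb, he⟩⟩
      intro hc
      rw [hc] at he
      exact hbm' (by omega)
    · rintro ⟨hxω, b, hb, he⟩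
      refine ⟨b, ⟨?_, hb⟩, he⟩
      intro hc
      rw [hc] at he
      exact hxω (by omega)
  -- ω = α + m
  set δ := Bi.min' hBine with hμ
  have hμBi : δ ∈ Bi := Bi.min'_mem hBine
  have hωαm : ω = α + m := by
    have h1 : α + δ ∈ (A.erase ω).erase α := by
      rw [← hZ1]; exact Finset.mem_image_of_mem _ hμBi
    have h2 : (ω - m) + δ ∈ (A.erase ω).erase α := by
      rw [← hZ2]; exact Finset.mem_image_of_mem _ hμBi
    have h3 : ∀ z ∈ (A.erase ω).erase α, (ω - m) + δ ≤ z := by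
      intro z hz
      rw [← hZ2] at hz
      obtain ⟨b, hb, he⟩ := Finset.mem_image.1 hz
      have := Bi.min'_le b hb
      omega
    have h4 : ∀ z ∈ (A.erase ω).erase α, α + δ ≤ z := by
      intro z hz
      rw [← hZ1] at hz
      obtain ⟨b, hb, he⟩ := Finset.mem_image.1 hz
      have := Bi.min'_le b hb
      omega
    have := h3 _ h1
    have := h4 _ h2
    omega
  -- A = α + B
  have hAB : A = B.image (fun b => α + b) := by
    calc A = insert ω (A.erase ω) := (Finset.insert_erase hωA).symm
    _ = insert ((fun b => α + b) m) ((B.erase m).image (fun b => α + b)) := by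
        rw [hX, hωαm]
    _ = (insert m (B.erase m)).image (fun b => α + b) := (Finset.image_insert _ _ _).symm
    _ = B.image (fun b => α + b) := by rw [Finset.insert_erase hmB]
  -- closure of B
  have hcl : ∀ b ∈ B, ∀ b' ∈ B, b + b' ∈ B ∨ b + b' - m ∈ B := by
    intro b hb b' hb'
    have hab : α + b ∈ A := by
      rw [hAB]; exact Finset.mem_image_of_mem _ hb
    rcases hmem b' hb' (α + b) hab with h | h
    · left
      rw [hAB] at h
      obtain ⟨c, hc, he⟩ := Finset.mem_image.1 h
      have hee : b + b' = c := by omega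
      rw [hee]; exact hc
    · right
      rw [hAB] at h
      obtain ⟨c, hc, he⟩ := Finset.mem_image.1 h
      have hee : b + b' - m = c := by omega
      rw [hee]; exact hc
  -- δ = smallest interior element
  obtain ⟨hδB, hδ0, hδm⟩ := hBimem δ hμBi
  have hδmin : ∀ x ∈ B, 0 < x → x < m → δ ≤ x := by
    intro x hx h1 h2
    apply Bi.min'_le
    rw [hBi]
    exact Finset.mem_erase.2 ⟨by omega, Finset.mem_erase.2 ⟨by omega, hx⟩⟩
  -- upward climb
  have up : ∀ b ∈ B, ∀ j : ℕ, b + δ * (j:ℤ) ≤ m → b + δ * (j:ℤ) ∈ B := by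
    intro b hb j
    induction j with
    | zero => intro _; simpa using hb
    | succ i ih =>
      intro hle
      have hcast : ((i+1:ℕ):ℤ) = (i:ℤ) + 1 := by push_cast; ring
      rw [hcast] at hle ⊢
      have hexp : δ * ((i:ℤ)+1) = δ * (i:ℤ) + δ := by ring
      have hle' : b + δ * (i:ℤ) ≤ m := by linarith
      have hprev := ih hle'
      rcases hcl _ hprev δ hδB with h | h
      · have hee : b + δ * (i:ℤ) + δ = b + δ * ((i:ℤ) + 1) := by ring
        rwa [hee] at h
      · have h0 := hB0 _ h
        have hee : b + δ * ((i:ℤ) + 1) = m := by linarith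
        rw [hee]; exact hmB
  -- divisibility
  have hdvd : ∀ b ∈ B, δ ∣ (m - b) := by
    intro b hb
    set q := (m - b) / δ with hq
    have hbm' := hBm b hb
    have hq0 : 0 ≤ q := Int.ediv_nonneg (by omega) (le_of_lt hδ0)
    have hqr : δ * q + (m - b) % δ = m - b := Int.mul_ediv_add_emod (m - b) δ
    have hr0 : 0 ≤ (m - b) % δ := Int.emod_nonneg _ (ne_of_gt hδ0)
    have hrδ : (m - b) % δ < δ := Int.emod_lt_of_pos _ hδ0
    have hyB : b + δ * q ∈ B := by
      have hcast : ((q.toNat : ℕ) : ℤ) = q := Int.toNat_of_nonneg hq0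
      have hle : b + δ * ((q.toNat : ℕ) : ℤ) ≤ m := by rw [hcast]; linarith
      have := up b hb q.toNat hle
      rwa [hcast] at this
    by_cases hym : b + δ * q = m
    · exact ⟨q, by linarith⟩
    · exfalso
      have hylt : b + δ * q < m := by
        rcases lt_or_eq_of_le (show b + δ * q ≤ m by linarith) with h | h
        · exact h
        · exact absurd h hym
      rcases hcl _ hyB δ hδB with h | h
      · have := hBm _ h
        linarith
      · have hz0 := hB0 _ h
        have hz1 : 0 < b + δ * q + δ - m := by linarith
        have hz3 : b + δ * q + δ - m < m := by linarith
        have := hδmin _ h hz1 hz3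
        linarith
  have hδdvdm : δ ∣ m := by simpa using hdvd 0 h0B
  have hδdvdb : ∀ b ∈ B, δ ∣ b := by
    intro b hb
    have h1 := hdvd b hb
    have hee : b = m - (m - b) := by ring
    rw [hee]
    exact dvd_sub hδdvdm h1
  -- B is exactly the multiples of δ in [0, m]
  set qm := m / δ with hqm
  have hqmval : m = δ * qm := by
    rw [hqm, Int.mul_ediv_cancel' hδdvdm]
  have hinjδ : Function.Injective (fun j : ℕ => δ * (j:ℤ)) := by
    intro j1 j2 h
    simp only at h
    have : (j1:ℤ) = j2 := mul_left_cancel₀ (ne_of_gt hδ0) h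
    exact_mod_cast this
  have hqm0 : 0 < qm := by
    by_contra hcon
    push_neg at hcon
    have : δ * qm ≤ 0 := mul_nonpos_of_nonneg_of_nonpos (le_of_lt hδ0) hcon
    linarith
  have hBP : B = (Finset.range (qm.toNat + 1)).image (fun j : ℕ => δ * (j:ℤ)) := by
    apply Finset.Subset.antisymm
    · intro b hb
      obtain ⟨t, ht⟩ := hδdvdb b hb
      have hb0' := hB0 b hb
      have hbm' := hBm b hb
      have ht0 : 0 ≤ t := by
        by_contra hcon
        push_neg at hcon
        have : δ * t < 0 := mul_neg_of_pos_of_neg hδ0 hcon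
        linarith
      have htqm : t ≤ qm := by
        have h1 : δ * t ≤ δ * qm := by linarith
        exact le_of_mul_le_mul_left h1 hδ0
      apply Finset.mem_image.2
      refine ⟨t.toNat, Finset.mem_range.2 (by omega), ?_⟩
      rw [Int.toNat_of_nonneg ht0]
      linarith
    · intro x hx
      obtain ⟨j, hj, he⟩ := Finset.mem_image.1 hx
      have hj' : (j:ℤ) ≤ qm := by
        have := Finset.mem_range.1 hj
        omega
      have hjm : (0:ℤ) + δ * (j:ℤ) ≤ m := by
        have h1 : δ * (j:ℤ) ≤ δ * qm := mul_le_mul_of_nonneg_left hj' (le_of_lt hδ0)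
        linarith
      have := up 0 h0B j hjm
      rw [zero_add] at this
      rwa [he] at this
  have hcardB : qm.toNat + 1 = n := by
    have h1 : B.card = qm.toNat + 1 := by
      rw [hBP, Finset.card_image_of_injective _ hinjδ, Finset.card_range]
    omega
  -- conclusion
  refine ⟨δ, hδ0, ⟨α, ?_⟩, ⟨0, ?_⟩⟩
  · have hAc : A.card = qm.toNat + 1 := by omega
    rw [hAc, hAB, hBP, Finset.image_image]
    congr 1
  · have hBc : B.card = qm.toNat + 1 := by omega
    rw [hBc]
    calc B = (Finset.range (qm.toNat + 1)).image (fun j : ℕ => δ * (j:ℤ)) := hBP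
    _ = (Finset.range (qm.toNat + 1)).image (fun i : ℕ => 0 + δ * (i:ℤ)) := by
        apply Finset.image_congr
        intro x _
        ring
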